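/- For every integer k > 3, the cycle C_k on k vertices has rainbow connection number rc(C_k) = ⌈k/2⌉. -/

import Mathlib

open SimpleGraph

/-- A graph `G` is rainbow connected under edge-coloring `c` if any two vertices are
joined by a path whose edges receive pairwise distinct colors. -/
def RainbowConnected {V : Type*} (G : SimpleGraph V) (c : Sym2 V → ℕ) : Prop :=
  ∀ u v : V, ∃ p : G.Walk u v, p.IsPath ∧ (p.edges.map c).Nodup

/-- The rainbow connection number: the least number of colors in an edge-coloring
making `G` rainbow connected. -/
noncomputable def rc {V : Type*} [Fintype V] (G : SimpleGraph V) : ℕ :=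
  sInf {n | ∃ c : Sym2 V → ℕ, (∀ e ∈ G.edgeSet, c e < n) ∧ RainbowConnected G c}

/-- Least `n` with `n ^ s ≥ t`, i.e. `⌈t^(1/s)⌉`. -/
noncomputable def ceilRoot (s t : ℕ) : ℕ := sInf {n | t ≤ n ^ s}

namespace RcCycleAux

open SimpleGraph List
open Fin.NatCast Fin.CommRing

variable {k : ℕ}

lemma val_one' [NeZero k] (hk : 1 < k) : (1 : Fin k).val = 1 := by
  rw [← Nat.cast_one, Fin.val_natCast, Nat.mod_eq_of_lt hk]

lemma adj_succ [NeZero k] (hk : 1 < k) (u : Fin k) : (cycleGraph k).Adj u (u + 1) := by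
  rw [cycleGraph_adj']
  right
  rw [add_sub_cancel_left, val_one' hk]

/-- The forward walk of length `d` starting at `u`. -/
def fwd [NeZero k] (hk : 1 < k) : (u : Fin k) → (d : ℕ) → (cycleGraph k).Walk u (u + (d : Fin k))
  | u, 0 => Walk.nil.copy rfl (by simp)
  | u, d + 1 => (Walk.cons (adj_succ hk u) (fwd hk (u + 1) d)).copy rfl (by push_cast; ring)

lemma fwd_edges [NeZero k] (hk : 1 < k) (u : Fin k) (d : ℕ) :
    (fwd hk u d).edges =
      (List.range d).map fun t : ℕ => s(u + (t : Fin k), u + (t : Fin k) + 1) := by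
  induction d generalizing u with
  | zero => simp [fwd]
  | succ d ih =>
    rw [fwd, Walk.edges_copy, Walk.edges_cons, ih, List.range_succ_eq_map, List.map_cons,
      List.map_map]
    congr 1
    · norm_num
    · refine List.map_congr_left fun t _ => ?_
      simp only [Function.comp_apply]
      have h1 : u + ((t.succ : ℕ) : Fin k) = u + 1 + (t : Fin k) := by push_cast; ring
      rw [h1]

lemma fwd_support [NeZero k] (hk : 1 < k) (u : Fin k) (d : ℕ) :
    (fwd hk u d).support = (List.range (d + 1)).map fun t : ℕ => u + (t : Fin k) := by
  induction d generalizing u with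
  | zero => simp [fwd, List.range_succ]
  | succ d ih =>
    rw [fwd, Walk.support_copy, Walk.support_cons, ih]
    conv_rhs => rw [List.range_succ_eq_map, List.map_cons, List.map_map]
    congr 1
    · norm_num
    · refine List.map_congr_left fun t _ => ?_
      simp only [Function.comp_apply]
      have h1 : u + ((t.succ : ℕ) : Fin k) = u + 1 + (t : Fin k) := by push_cast; ring
      rw [h1]

lemma fwd_isPath [NeZero k] (hk : 1 < k) (u : Fin k) (d : ℕ) (hd : d < k) :
    (fwd hk u d).IsPath := by
  rw [Walk.isPath_def, fwd_support]
  refine List.Nodup.map_on ?_ List.nodup_range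
  intro t ht t' ht' h
  rw [List.mem_range] at ht ht'
  have h2 := congrArg Fin.val (add_left_cancel h)
  rwa [Fin.val_natCast, Fin.val_natCast, Nat.mod_eq_of_lt (by omega),
    Nat.mod_eq_of_lt (by omega)] at h2

/-- Core number-theoretic fact for distinctness of colors along a short arc. -/
lemma core (k m x d : ℕ) (hk : 3 < k) (hm : m = (k + 1) / 2) (hx : x < k) (hd : 0 < d)
    (hd2 : d < k / 2) : x % m ≠ (x + d) % k % m := by
  intro h
  have hy : ((x + d) % k = x + d ∧ x + d < k) ∨ ((x + d) % k = x + d - k ∧ k ≤ x + d) := by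
    rcases Nat.lt_or_ge (x + d) k with h' | h'
    · exact Or.inl ⟨Nat.mod_eq_of_lt h', h'⟩
    · refine Or.inr ⟨?_, h'⟩
      rw [Nat.mod_eq_sub_mod h', Nat.mod_eq_of_lt (by omega)]
  have hmod : ∀ z : ℕ, z < k → z % m = z ∨ (m ≤ z ∧ z % m = z - m) := by
    intro z hz
    rcases Nat.lt_or_ge z m with h' | h'
    · exact Or.inl (Nat.mod_eq_of_lt h')
    · exact Or.inr ⟨h', by rw [Nat.mod_eq_sub_mod h', Nat.mod_eq_of_lt (by omega)]⟩
  have hxm := hmod x hx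
  have hym := hmod ((x + d) % k) (Nat.mod_lt _ (by omega))
  rcases hy with ⟨e1, b1⟩ | ⟨e1, b1⟩ <;>
    rcases hxm with e2 | ⟨b2, e2⟩ <;>
      rcases hym with e3 | ⟨b3, e3⟩ <;>
        rw [e2, e3] at h <;> rw [e1] at h <;> omega

lemma window_nodup [NeZero k] (hk : 3 < k) (m : ℕ) (hm : m = (k + 1) / 2) (u : Fin k)
    (l : ℕ) (hl : l ≤ k / 2) :
    ((List.range l).map fun t : ℕ => (u + (t : Fin k)).val % m).Nodup := by
  refine List.Nodup.map_on ?_ List.nodup_range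
  intro t ht t' ht' heq
  rw [List.mem_range] at ht ht'
  have hval : ∀ s : ℕ, s < k → (u + (s : Fin k)).val = (u.val + s) % k := by
    intro s hs
    rw [Fin.add_def, Fin.val_natCast, Nat.mod_eq_of_lt hs]
  have h1 := hval t (by omega)
  have h2 := hval t' (by omega)
  by_contra hne
  rcases Nat.lt_or_ge t t' with hlt | hge
  · refine core k m ((u.val + t) % k) (t' - t) hk hm (Nat.mod_lt _ (by omega)) (by omega)
      (by omega) ?_
    have key : ((u.val + t) % k + (t' - t)) % k = (u.val + t') % k := by
      rw [Nat.mod_add_mod]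
      congr 1
      omega
    rw [key, ← h1, ← h2]
    exact heq
  · have hlt' : t' < t := by omega
    refine core k m ((u.val + t') % k) (t - t') hk hm (Nat.mod_lt _ (by omega)) (by omega)
      (by omega) ?_
    have key : ((u.val + t') % k + (t - t')) % k = (u.val + t) % k := by
      rw [Nat.mod_add_mod]
      congr 1
      omega
    rw [key, ← h1, ← h2]
    exact heq.symm

lemma nodup_len_le {n : ℕ} {l : List ℕ} (hl : l.Nodup) (hb : ∀ x ∈ l, x < n) :
    l.length ≤ n := by
  calc l.length = l.toFinset.card := (List.toFinset_card_of_nodup hl).symm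
    _ ≤ (Finset.range n).card := Finset.card_le_card fun x hx =>
        Finset.mem_range.mpr (hb x (List.mem_toFinset.mp hx))
    _ = n := Finset.card_range n

lemma walk_length_le {n : ℕ} {c : Sym2 (Fin k) → ℕ} {u v : Fin k}
    (hlt : ∀ e ∈ (cycleGraph k).edgeSet, c e < n) (w : (cycleGraph k).Walk u v)
    (hnd : (w.edges.map c).Nodup) : w.length ≤ n := by
  have h1 : (w.edges.map c).length ≤ n := by
    refine nodup_len_le hnd fun x hx => ?_
    obtain ⟨e, he, rfl⟩ := List.mem_map.mp hx
    exact hlt e (w.edges_subset_edgeSet he)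
  rwa [List.length_map, Walk.length_edges] at h1

/-- Decomposition of a walk in the cycle graph into forward and backward steps. -/
lemma walk_pq [NeZero k] (hk : 3 < k) {u v : Fin k} (w : (cycleGraph k).Walk u v) :
    ∃ p q : ℕ, p + q = w.length ∧ (p : Fin k) - (q : Fin k) = v - u ∧
      (q = 0 → w.edges = (List.range p).map fun t : ℕ => s(u + (t : Fin k), u + (t : Fin k) + 1)) := by
  induction w with
  | nil => exact ⟨0, 0, rfl, by simp, fun _ => by simp⟩
  | @cons x y z h w' ih =>
    obtain ⟨p, q, hpq, hfin, hedge⟩ := ih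
    rcases cycleGraph_adj'.mp h with h1 | h1
    · -- x - y = 1, i.e. y = x - 1 : backward step
      have hxy : y = x - 1 := by
        have h2 : x - y = 1 := Fin.ext (by rw [h1, val_one' (by omega)])
        linear_combination -h2
      subst hxy
      refine ⟨p, q + 1, by simp [Walk.length_cons]; omega, ?_, fun h0 => by omega⟩
      push_cast
      linear_combination hfin
    · -- y - x = 1, i.e. y = x + 1 : forward step
      have hxy : y = x + 1 := by
        have h2 : y - x = 1 := Fin.ext (by rw [h1, val_one' (by omega)])
        linear_combination h2
      subst hxy
      refine ⟨p + 1, q, by simp [Walk.length_cons]; omega, ?_, ?_⟩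
      · push_cast
        linear_combination hfin
      · intro h0
        rw [Walk.edges_cons, hedge h0, List.range_succ_eq_map, List.map_cons, List.map_map]
        congr 1
        · norm_num
        · refine List.map_congr_left fun t _ => ?_
          simp only [Function.comp_apply]
          have ha : x + ((t.succ : ℕ) : Fin k) = x + 1 + (t : Fin k) := by push_cast; ring
          rw [ha]


lemma two_ne_zero' [NeZero k] (hk : 3 < k) : (1 + 1 : Fin k) ≠ 0 := by
  intro h
  have h1 : ((1 + 1 : ℕ) : Fin k) = 0 := by rw [Nat.cast_add, Nat.cast_one]; exact h
  have h2 := congrArg Fin.val h1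
  rw [Fin.val_natCast, Fin.val_zero, Nat.mod_eq_of_lt (by omega)] at h2
  omega

lemma upper_mem [NeZero k] (hk : 3 < k) :
    ∃ c : Sym2 (Fin k) → ℕ, (∀ e ∈ (SimpleGraph.cycleGraph k).edgeSet, c e < (k + 1) / 2) ∧
      RainbowConnected (SimpleGraph.cycleGraph k) c := by
  set m := (k + 1) / 2 with hm
  have hk1 : (1 : ℕ) < k := by omega
  have hcomm : ∀ a b : Fin k,
      (if b = a + 1 then a.val % m else if a = b + 1 then b.val % m else 0) =
      (if a = b + 1 then b.val % m else if b = a + 1 then a.val % m else 0) := by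
    intro a b
    by_cases h1 : b = a + 1 <;> by_cases h2 : a = b + 1
    · exfalso
      have h3 : a = a + (1 + 1) := by
        calc a = b + 1 := h2
          _ = (a + 1) + 1 := by rw [h1]
          _ = a + (1 + 1) := by ring
      exact two_ne_zero' hk (left_eq_add.mp h3)
    · rw [if_pos h1, if_neg h2, if_pos h1]
    · rw [if_neg h1, if_pos h2, if_pos h2]
    · rw [if_neg h1, if_neg h2, if_neg h2, if_neg h1]
  set c : Sym2 (Fin k) → ℕ := Sym2.lift
    ⟨fun a b => if b = a + 1 then a.val % m else if a = b + 1 then b.val % m else 0,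
      hcomm⟩ with hc
  have hcs : ∀ x : Fin k, c s(x, x + 1) = x.val % m := by
    intro x
    rw [hc, Sym2.lift_mk]
    exact if_pos rfl
  have hclt : ∀ e, c e < m := by
    intro e
    induction e using Sym2.ind with
    | _ a b =>
      rw [hc, Sym2.lift_mk]
      dsimp only
      split
      · exact Nat.mod_lt _ (by omega)
      · split
        · exact Nat.mod_lt _ (by omega)
        · omega
  refine ⟨c, fun e _ => hclt e, fun u v => ?_⟩
  have hcolors : ∀ (w₀ : Fin k) (l : ℕ), l ≤ k / 2 →
      (((fwd hk1 w₀ l).edges.map c)).Nodup := by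
    intro w₀ l hl
    rw [fwd_edges, List.map_map]
    have hfun : (c ∘ fun t : ℕ => s(w₀ + (t : Fin k), w₀ + (t : Fin k) + 1)) =
        fun t : ℕ => (w₀ + (t : Fin k)).val % m := by
      funext t
      exact hcs _
    rw [hfun]
    exact window_nodup hk m hm w₀ l hl
  by_cases hd : (v - u).val ≤ k / 2
  · refine ⟨(fwd hk1 u (v - u).val).copy rfl (by rw [Fin.cast_val_eq_self]; ring), ?_, ?_⟩
    · rw [Walk.isPath_copy]
      exact fwd_isPath hk1 u _ (by omega)
    · rw [Walk.edges_copy]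
      exact hcolors u _ hd
  · have hvu : v - u ≠ 0 := by
      intro h0
      rw [h0] at hd
      simp at hd
    have hlt : (v - u).val < k := (v - u).is_lt
    have hend : v + ((k - (v - u).val : ℕ) : Fin k) = u := by
      rw [Nat.cast_sub hlt.le, Fin.natCast_self, Fin.cast_val_eq_self]
      ring
    refine ⟨((fwd hk1 v (k - (v - u).val)).copy rfl hend).reverse, ?_, ?_⟩
    · exact ((Walk.isPath_copy _ rfl hend).mpr (fwd_isPath hk1 v _ (by omega))).reverse
    · rw [Walk.edges_reverse, List.map_reverse, List.nodup_reverse, Walk.edges_copy]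
      exact hcolors v _ (by omega)


lemma lower_bound [NeZero k] (hk : 3 < k) (n : ℕ)
    (hcn : ∃ c : Sym2 (Fin k) → ℕ, (∀ e ∈ (SimpleGraph.cycleGraph k).edgeSet, c e < n) ∧
      RainbowConnected (SimpleGraph.cycleGraph k) c) :
    (k + 1) / 2 ≤ n := by
  obtain ⟨c, hlt, hrb⟩ := hcn
  by_contra hn
  push_neg at hn
  have hk1 : (1 : ℕ) < k := by omega
  -- the generic analysis of a rainbow path from `u` to `u + k/2`
  have main : ∀ u : Fin k, ∃ p q : ℕ,
      p % k = (k / 2 + q) % k ∧ p + q ≤ n ∧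
      (q = 0 → ∃ w : (SimpleGraph.cycleGraph k).Walk u (u + ((k / 2 : ℕ) : Fin k)),
        (w.edges.map c).Nodup ∧
        w.edges = (List.range p).map fun t : ℕ => s(u + (t : Fin k), u + (t : Fin k) + 1)) := by
    intro u
    obtain ⟨w, hw, hnd⟩ := hrb u (u + ((k / 2 : ℕ) : Fin k))
    obtain ⟨p, q, hpq, hfin, hedge⟩ := walk_pq hk w
    have hlen : w.length ≤ n := walk_length_le hlt w hnd
    have hcast : (p : Fin k) = ((k / 2 + q : ℕ) : Fin k) := by
      push_cast
      linear_combination hfin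
    have hmodk : p % k = (k / 2 + q) % k := by
      have h2 := congrArg Fin.val hcast
      rwa [Fin.val_natCast, Fin.val_natCast] at h2
    exact ⟨p, q, hmodk, by omega, fun h0 => ⟨w, hnd, hedge h0⟩⟩
  rcases Nat.even_or_odd k with hke | hko
  · -- even case: no short path exists, contradiction
    obtain ⟨r, hr⟩ := hke
    obtain ⟨p, q, hmodk, hpq, -⟩ := main 0
    rw [Nat.mod_eq_of_lt (by omega), Nat.mod_eq_of_lt (by omega)] at hmodk
    omega
  · -- odd case
    obtain ⟨r, hr⟩ := hko
    set col : Fin k → ℕ := fun x => c s(x, x + 1) with hcol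
    have win : ∀ u : Fin k,
        ((List.range (k / 2)).map fun t : ℕ => col (u + (t : Fin k))).Nodup ∧ k / 2 ≤ n := by
      intro u
      obtain ⟨p, q, hmodk, hpq, hwin⟩ := main u
      rw [Nat.mod_eq_of_lt (by omega), Nat.mod_eq_of_lt (by omega)] at hmodk
      have hq0 : q = 0 := by omega
      have hpr : p = k / 2 := by omega
      obtain ⟨w, hnd, hedges⟩ := hwin hq0
      rw [hpr] at hedges
      rw [hedges, List.map_map] at hnd
      constructor
      · exact hnd
      · omega
    have hKn : k / 2 = n := by
      have h1 := (win 0).2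
      omega
    have hnodup : ∀ u : Fin k,
        ((List.range n).map fun t : ℕ => col (u + (t : Fin k))).Nodup := by
      intro u
      rw [← hKn]
      exact (win u).1
    have hbound : ∀ (u : Fin k), col u < n :=
      fun u => hlt s(u, u + 1) ((SimpleGraph.mem_edgeSet _).mpr (adj_succ hk1 u))
    have hfinset : ∀ u : Fin k,
        ((List.range n).map fun t : ℕ => col (u + (t : Fin k))).toFinset = Finset.range n := by
      intro u
      apply Finset.eq_of_subset_of_card_le
      · intro x hx
        rw [List.mem_toFinset] at hx
        obtain ⟨t, _, rfl⟩ := List.mem_map.mp hx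
        exact Finset.mem_range.mpr (hbound _)
      · rw [Finset.card_range, List.toFinset_card_of_nodup (hnodup u), List.length_map,
          List.length_range]
    have hn2 : 2 ≤ n := by omega
    have hper : ∀ u : Fin k, col u = col (u + ((n : ℕ) : Fin k)) := by
      intro u
      have h0 : col u ∈ (List.range n).map fun t : ℕ => col (u + 1 + (t : Fin k)) := by
        rw [← List.mem_toFinset, hfinset (u + 1), Finset.mem_range]
        exact hbound u
      obtain ⟨t, ht, hteq⟩ := List.mem_map.mp h0
      rw [List.mem_range] at ht
      rcases Nat.lt_or_ge t (n - 1) with h' | h'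
      · exfalso
        have inj := List.inj_on_of_nodup_map (hnodup u)
        have e1 : col (u + ((0 : ℕ) : Fin k)) = col (u + ((t + 1 : ℕ) : Fin k)) := by
          have ha : u + ((t + 1 : ℕ) : Fin k) = u + 1 + (t : Fin k) := by push_cast; ring
          rw [ha, hteq]
          norm_num
        have := inj (List.mem_range.mpr (show 0 < n by omega)) (List.mem_range.mpr (show t + 1 < n by omega)) e1
        omega
      · have ht' : t = n - 1 := by omega
        rw [← hteq, ht']
        congr 1
        rw [show ((n : ℕ) : Fin k) = ((1 + (n - 1) : ℕ) : Fin k) by congr 1; omega]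
        push_cast
        ring
    have hk1' : ((k - 1 : ℕ) : Fin k) = -1 := by
      have h1 : ((k - 1 : ℕ) : Fin k) + 1 = 0 := by
        rw [show ((k - 1 : ℕ) : Fin k) = ((k : ℕ) : Fin k) - ((1 : ℕ) : Fin k) by
          rw [← Nat.cast_sub (by omega)], Fin.natCast_self]
        push_cast
        ring
      exact eq_neg_of_add_eq_zero_left h1
    have hnn : ((n : ℕ) : Fin k) + ((n : ℕ) : Fin k) = -1 := by
      rw [← Nat.cast_add, show n + n = k - 1 by omega, hk1']
    have hstep : ∀ u : Fin k, col (u + 1) = col u := by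
      intro u
      have h1 := hper (u + 1)
      have h2 := hper (u + 1 + ((n : ℕ) : Fin k))
      rw [h1, h2]
      congr 1
      rw [add_assoc, hnn]
      ring
    have hconst : ∀ t : ℕ, col ((t : ℕ) : Fin k) = col 0 := by
      intro t
      induction t with
      | zero => norm_num
      | succ t ih =>
        rw [show ((t + 1 : ℕ) : Fin k) = ((t : ℕ) : Fin k) + 1 by push_cast; ring, hstep, ih]
    have inj := List.inj_on_of_nodup_map (hnodup 0)
    have e1 : col ((0 : Fin k) + ((0 : ℕ) : Fin k)) = col ((0 : Fin k) + ((1 : ℕ) : Fin k)) := by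
      have a0 := hconst 0
      have a1 := hconst 1
      have b0 : (0 : Fin k) + ((0 : ℕ) : Fin k) = ((0 : ℕ) : Fin k) := by push_cast; ring
      have b1 : (0 : Fin k) + ((1 : ℕ) : Fin k) = ((1 : ℕ) : Fin k) := by push_cast; ring
      rw [b0, b1, a0, a1]
    have := inj (List.mem_range.mpr (show 0 < n by omega)) (List.mem_range.mpr (show 1 < n by omega)) e1
    omega

end RcCycleAux

/-- rc(C_k) = ⌈k/2⌉ for k > 3. -/
theorem rc_cycleGraph (k : ℕ) (hk : 3 < k) :
    rc (SimpleGraph.cycleGraph k) = (k + 1) / 2 := by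
  haveI : NeZero k := ⟨by omega⟩
  have hup := RcCycleAux.upper_mem hk
  apply le_antisymm
  · exact Nat.sInf_le hup
  · exact le_csInf ⟨_, hup⟩ fun n hn => RcCycleAux.lower_bound hk n hn
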